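/- Let d ≥ 3 and let Γ = (V,E) be a d-regular connected finite graph with normalized spectral gap λ₁(Γ) ≥ 1 - 2√(d-1)/d (a Ramanujan graph). Then removing fewer than (d/6 - √(d-1)/3)·|V| edges from Γ leaves a connected component with at least 2|V|/3 vertices. -/

import Mathlib

open Finset

open Module.End Finset in
private theorem specLB10 {V : Type*} [Fintype V] [DecidableEq V] [Nonempty V]
    (M : Matrix V V ℝ) (hM : M.IsHermitian) (lam : ℝ)
    (hmin : ∀ μ : ℝ, HasEigenvalue (Matrix.toLin' M) μ → μ ≠ 0 → lam ≤ μ)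
    (hker : ∀ g : V → ℝ, M.mulVec g = 0 → ∀ v w : V, g v = g w)
    (f : EuclideanSpace ℝ V) (hf : ∑ v, f v = 0) :
    lam * ∑ v, f v ^ 2 ≤ ∑ v, f v * M.mulVec f v := by
  set T := Matrix.toEuclideanLin M with hTdef
  have hT : T.IsSymmetric := Matrix.isHermitian_iff_isSymmetric.mp hM
  have hn : Module.finrank ℝ (EuclideanSpace ℝ V) = Fintype.card V := finrank_euclideanSpace
  set b := hT.eigenvectorBasis hn with hb
  set μ := hT.eigenvalues hn with hμ
  have hrepr : ∀ i, b.repr (T f) i = μ i * b.repr f i := fun i =>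
    hT.eigenvectorBasis_apply_self_apply hn f i
  have h1 : (inner ℝ f (T f) : ℝ) = ∑ i, (b.repr f i) * (μ i * b.repr f i) := by
    rw [← b.repr.inner_map_map f (T f)]
    simp only [PiLp.inner_apply, RCLike.inner_apply, starRingEnd_apply, star_trivial]
    exact Finset.sum_congr rfl fun i _ => by rw [hrepr i]; ring
  have h2 : (inner ℝ f f : ℝ) = ∑ i, (b.repr f i) ^ 2 := by
    rw [← b.repr.inner_map_map f f]
    simp only [PiLp.inner_apply, RCLike.inner_apply, starRingEnd_apply, star_trivial, sq]
  have key : ∀ i, lam * (b.repr f i) ^ 2 ≤ (b.repr f i) * (μ i * b.repr f i) := by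
    intro i
    by_cases h0 : μ i = 0
    · have hz : T (b i) = 0 := by
        have h4 := hT.apply_eigenvectorBasis hn i
        have h5 : hT.eigenvalues hn i = 0 := h0
        rw [h5] at h4
        exact h4.trans (by norm_num)
      have hz' : M.mulVec (b i) = 0 := by simpa [hTdef] using congrArg WithLp.ofLp hz
      have hc := hker (b i) hz'
      have : b.repr f i = 0 := by
        rw [b.repr_apply_apply]
        simp only [PiLp.inner_apply, RCLike.inner_apply, starRingEnd_apply, star_trivial]
        obtain ⟨v₀⟩ := ‹Nonempty V›
        calc ∑ v, f v * b i v = ∑ v, b i v₀ * f v :=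
              Finset.sum_congr rfl fun v _ => by rw [hc v v₀, mul_comm]
          _ = b i v₀ * ∑ v, f v := by rw [Finset.mul_sum]
          _ = 0 := by rw [hf, mul_zero]
      rw [this]; ring_nf; simp
    · have hev : HasEigenvalue (Matrix.toLin' M) (μ i) := by
        obtain ⟨x, hx, hx0⟩ := (hT.hasEigenvalue_eigenvalues hn i).exists_hasEigenvector
        have hx' : T x = μ i • x := mem_eigenspace_iff.mp hx
        have : Matrix.toLin' M x = μ i • x := by simpa [hTdef] using congrArg WithLp.ofLp hx'
        exact hasEigenvalue_of_hasEigenvector ⟨mem_eigenspace_iff.mpr this, by simpa using hx0⟩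
      have := hmin (μ i) hev h0
      nlinarith [sq_nonneg (b.repr f i)]
  have main : lam * (inner ℝ f f : ℝ) ≤ (inner ℝ f (T f) : ℝ) := by
    rw [h1, h2, Finset.mul_sum]
    exact Finset.sum_le_sum fun i _ => key i
  have e1 : (inner ℝ f (T f) : ℝ) = ∑ v, f v * M.mulVec f v := by
    simp only [PiLp.inner_apply, RCLike.inner_apply, starRingEnd_apply, star_trivial]
    exact Finset.sum_congr rfl fun v _ => by rw [mul_comm]; rfl
  have e2 : (inner ℝ f f : ℝ) = ∑ v, f v ^ 2 := by
    simp only [PiLp.inner_apply, RCLike.inner_apply, starRingEnd_apply, star_trivial, sq]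
  rw [e1, e2] at main
  exact main

private theorem kerConst10 {V : Type*} [Fintype V] [DecidableEq V] (G : SimpleGraph V)
    [DecidableRel G.Adj] (hconn : G.Connected) (d : ℕ)
    (hreg : G.IsRegularOfDegree d) (g : V → ℝ)
    (hg : ((1 : Matrix V V ℝ) - (d : ℝ)⁻¹ • G.adjMatrix ℝ).mulVec g = 0) :
    ∀ v w : V, g v = g w := by
  have harm : ∀ v : V, (d : ℝ) * g v = ∑ w ∈ G.neighborFinset v, g w := by
    intro v
    have h := congrFun hg v
    simp only [Matrix.sub_mulVec, Matrix.one_mulVec, Matrix.smul_mulVec,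
      Pi.sub_apply, Pi.smul_apply, Pi.zero_apply, smul_eq_mul,
      SimpleGraph.adjMatrix_mulVec_apply] at h
    rcases Nat.eq_zero_or_pos d with hd0 | hd0
    · subst hd0
      have : G.neighborFinset v = ∅ := by
        rw [← Finset.card_eq_zero, SimpleGraph.card_neighborFinset_eq_degree, hreg v]
      simp [this]
    · have hdR : (0:ℝ) < d := by positivity
      field_simp at h ⊢
      linarith
  have hV : Nonempty V := hconn.nonempty
  obtain ⟨v₀, -, hmax⟩ := Finset.exists_max_image Finset.univ g ⟨Classical.arbitrary V, mem_univ _⟩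
  set m := g v₀ with hm
  have hmax' : ∀ v, g v ≤ m := fun v => hmax v (mem_univ v)
  have step : ∀ v w : V, G.Adj v w → g v = m → g w = m := by
    intro v w hvw hv
    by_contra hne
    have hlt : g w < m := lt_of_le_of_ne (hmax' w) hne
    have hsum : ∑ u ∈ G.neighborFinset v, g u < ∑ u ∈ G.neighborFinset v, m :=
      Finset.sum_lt_sum (fun u _ => hmax' u)
        ⟨w, (SimpleGraph.mem_neighborFinset G v w).mpr hvw, hlt⟩
    rw [Finset.sum_const, SimpleGraph.card_neighborFinset_eq_degree, hreg v,
      nsmul_eq_mul, ← harm v, hv] at hsum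
    linarith
  have walkstep : ∀ {a b : V} (p : G.Walk a b), g a = m → g b = m := by
    intro a b p
    induction p with
    | nil => exact id
    | cons h q ih => exact fun ha => ih (step _ _ h ha)
  have all : ∀ w, g w = m := fun w => walkstep (hconn.preconnected v₀ w).some rfl
  intro v w; rw [all v, all w]

open Classical in
private theorem findA10 {V : Type*} [Fintype V] [DecidableEq V] (G' : SimpleGraph V)
    (hV : Nonempty V)
    (hcomp : ∀ v : V, (({w | G'.Reachable v w} : Set V).ncard : ℝ) <
      2 * (Fintype.card V) / 3) :
    ∃ A : Finset V, (∀ v ∈ A, ∀ w, G'.Reachable v w → w ∈ A) ∧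
      ((Fintype.card V : ℝ)/3 ≤ A.card) ∧ ((A.card : ℝ) ≤ 2 * (Fintype.card V)/3) := by
  classical
  set n := Fintype.card V with hn
  have hnR : (0:ℝ) < n := by exact_mod_cast Fintype.card_pos
  set P : Finset V → Prop := fun A => (∀ v ∈ A, ∀ w, G'.Reachable v w → w ∈ A) ∧
    (n:ℝ)/3 ≤ A.card with hP
  have hPuniv : P Finset.univ := by
    refine ⟨fun _ _ _ _ => Finset.mem_univ _, ?_⟩
    rw [Finset.card_univ, ← hn]
    linarith
  obtain ⟨A, hAmem, hAmin⟩ := Finset.exists_min_image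
    (Finset.univ.filter fun A => P A) Finset.card
    ⟨Finset.univ, by simp only [Finset.mem_filter, Finset.mem_univ, true_and]; exact hPuniv⟩
  rw [Finset.mem_filter] at hAmem
  have hAcl := hAmem.2.1
  have hAlb := hAmem.2.2
  refine ⟨A, hAcl, hAlb, ?_⟩
  by_contra hub
  push_neg at hub
  have hApos : 0 < A.card := by
    have h : (0:ℝ) < A.card := by linarith
    exact_mod_cast h
  obtain ⟨v, hv⟩ := Finset.card_pos.mp hApos
  set C := Finset.univ.filter (fun w => G'.Reachable v w) with hC
  have hCA : C ⊆ A := fun w hw => hAcl v hv w (Finset.mem_filter.mp hw).2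
  have hvC : v ∈ C := Finset.mem_filter.mpr ⟨Finset.mem_univ _, SimpleGraph.Reachable.refl v⟩
  have hClt : (C.card : ℝ) < 2 * n / 3 := by
    have h := hcomp v
    have he : ({w | G'.Reachable v w} : Set V).ncard = C.card := by
      rw [Set.ncard_eq_toFinset_card']
      congr 1
      ext w
      simp [hC]
    rw [he] at h
    exact h
  by_cases hCc : (n:ℝ)/3 ≤ C.card
  · have hPC : P C := by
      refine ⟨fun a ha w hw => ?_, hCc⟩
      exact Finset.mem_filter.mpr ⟨Finset.mem_univ _, ((Finset.mem_filter.mp ha).2).trans hw⟩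
    have h := hAmin C (by simp only [Finset.mem_filter, Finset.mem_univ, true_and]; exact hPC)
    have h' : (A.card : ℝ) ≤ C.card := by exact_mod_cast h
    linarith
  · push_neg at hCc
    set B := A \ C with hB
    have hBcard : (B.card : ℝ) = A.card - C.card := by
      rw [hB, Finset.card_sdiff_of_subset hCA]
      push_cast [Nat.cast_sub (Finset.card_le_card hCA)]
      ring
    have hPB : P B := by
      refine ⟨fun a ha w hw => ?_, ?_⟩
      · obtain ⟨haA, haC⟩ := Finset.mem_sdiff.mp ha
        refine Finset.mem_sdiff.mpr ⟨hAcl a haA w hw, fun hwC => haC ?_⟩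
        have hvw : G'.Reachable v w := (Finset.mem_filter.mp hwC).2
        exact Finset.mem_filter.mpr ⟨Finset.mem_univ _, hvw.trans hw.symm⟩
      · rw [hBcard]; linarith
    have h := hAmin B (by simp only [Finset.mem_filter, Finset.mem_univ, true_and]; exact hPB)
    have h' : (A.card : ℝ) ≤ B.card := by exact_mod_cast h
    have hC1 : (1:ℝ) ≤ C.card := by exact_mod_cast Finset.card_pos.mpr ⟨v, hvC⟩
    linarith

set_option maxHeartbeats 1000000 in
/-- For a `d`-regular Ramanujan graph (`d ≥ 3`, normalized spectral gap
`lam ≥ 1 - 2√(d-1)/d`), removing fewer than `(d/6 - √(d-1)/3)·|V|` edges leaves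
a connected component with at least `2|V|/3` vertices. -/
theorem stmt10 {V : Type*} [Fintype V] [DecidableEq V]
    (G : SimpleGraph V) [DecidableRel G.Adj] (hconn : G.Connected)
    (d : ℕ) (hd : 3 ≤ d) (hreg : G.IsRegularOfDegree d)
    (lam : ℝ)
    (heig : Module.End.HasEigenvalue
      (Matrix.toLin' ((1 : Matrix V V ℝ) - (d : ℝ)⁻¹ • G.adjMatrix ℝ)) lam)
    (hne : lam ≠ 0)
    (hmin : ∀ μ : ℝ, Module.End.HasEigenvalue
      (Matrix.toLin' ((1 : Matrix V V ℝ) - (d : ℝ)⁻¹ • G.adjMatrix ℝ)) μ → μ ≠ 0 → lam ≤ μ)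
    (hram : 1 - 2 * Real.sqrt (d - 1) / d ≤ lam)
    (G' : SimpleGraph V) [DecidableRel G'.Adj] (hle : G' ≤ G)
    (hrem : (((G.edgeFinset \ G'.edgeFinset).card : ℝ)) <
      ((d : ℝ) / 6 - Real.sqrt (d - 1) / 3) * Fintype.card V) :
    ∃ K : G'.ConnectedComponent, (2 * (Fintype.card V : ℝ)) / 3 ≤ (K.supp.ncard : ℝ) := by
  classical
  have hV : Nonempty V := hconn.nonempty
  by_contra hcon
  push_neg at hcon
  have hnR : (0:ℝ) < Fintype.card V := by exact_mod_cast Fintype.card_pos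
  have hdpos : 0 < d := by omega
  have hdR : (0:ℝ) < d := by exact_mod_cast hdpos
  have hd0 : (d:ℝ) ≠ 0 := ne_of_gt hdR
  set n : ℕ := Fintype.card V with hn
  -- all components are small, as filters
  have hcomp : ∀ v : V, (({w | G'.Reachable v w} : Set V).ncard : ℝ) <
      2 * (n:ℝ) / 3 := by
    intro v
    have h := hcon (G'.connectedComponentMk v)
    have he : (G'.connectedComponentMk v).supp = {w | G'.Reachable v w} := by
      ext w
      simp only [SimpleGraph.ConnectedComponent.mem_supp_iff, Set.mem_setOf_eq,
        SimpleGraph.ConnectedComponent.eq]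
      exact ⟨fun h => h.symm, fun h => h.symm⟩
    rw [he] at h
    linarith
  obtain ⟨A, hAcl, hAlb, hAub⟩ := findA10 G' hV hcomp
  set a : ℝ := (A.card : ℝ) with ha
  set alp : ℝ := a / n with halp
  set chi : V → ℝ := fun v => if v ∈ A then 1 else 0 with hchi
  set Nchi : V → ℝ := fun v => ∑ w ∈ G.neighborFinset v, chi w with hNchi
  set M : Matrix V V ℝ := (1 : Matrix V V ℝ) - (d : ℝ)⁻¹ • G.adjMatrix ℝ with hM
  have hMH : M.IsHermitian := by
    rw [hM]
    unfold Matrix.IsHermitian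
    ext i j
    simp only [Matrix.conjTranspose_apply, Matrix.sub_apply, Matrix.smul_apply,
      Matrix.one_apply, SimpleGraph.adjMatrix_apply, smul_eq_mul, star_trivial]
    have hadj : G.Adj j i ↔ G.Adj i j := G.adj_comm j i
    by_cases h1 : i = j <;> by_cases h2 : G.Adj i j <;>
      simp [h1, h2, hadj, eq_comm]
  have hchi2 : ∀ v, chi v ^ 2 = chi v := by
    intro v; by_cases h : v ∈ A <;> simp [hchi, h]
  have hS0 : ∑ v, chi v = a := by
    simp only [hchi, Finset.sum_ite_mem, Finset.univ_inter, Finset.sum_const,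
      nsmul_eq_mul, mul_one, ha]
  have hS2 : ∑ v, Nchi v = d * a := by
    calc ∑ v, Nchi v = ∑ v, ∑ w, if G.Adj v w then chi w else 0 := by
          refine Finset.sum_congr rfl fun v _ => ?_
          simp only [hNchi]
          rw [SimpleGraph.neighborFinset_eq_filter, Finset.sum_filter]
      _ = ∑ w, ∑ v, if G.Adj v w then chi w else 0 := Finset.sum_comm
      _ = ∑ w, ∑ v, if G.Adj w v then chi w else 0 := by
          exact Finset.sum_congr rfl fun w _ => Finset.sum_congr rfl fun v _ =>
            if_congr (G.adj_comm v w) rfl rfl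
      _ = ∑ w, ∑ v ∈ G.neighborFinset w, chi w := by
          refine Finset.sum_congr rfl fun w _ => ?_
          rw [SimpleGraph.neighborFinset_eq_filter, Finset.sum_filter]
      _ = ∑ w, (d:ℝ) * chi w := by
          refine Finset.sum_congr rfl fun w _ => ?_
          rw [Finset.sum_const, SimpleGraph.card_neighborFinset_eq_degree, hreg w, nsmul_eq_mul]
      _ = d * a := by rw [← Finset.mul_sum, hS0]
  set S1 : ℝ := ∑ v, chi v * Nchi v with hS1def
  set X : Finset (V × V) :=
    Finset.univ.filter (fun p => G.Adj p.1 p.2 ∧ p.1 ∈ A ∧ p.2 ∉ A) with hX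
  have hXcard : (X.card : ℝ) = d * a - S1 := by
    have h1 : (X.card : ℝ)
        = ∑ p : V × V, if G.Adj p.1 p.2 ∧ p.1 ∈ A ∧ p.2 ∉ A then (1:ℝ) else 0 := by
      rw [hX, Finset.card_filter]
      push_cast [apply_ite (Nat.cast : ℕ → ℝ)]
      rfl
    rw [h1, Fintype.sum_prod_type]
    calc ∑ v, ∑ w, (if G.Adj v w ∧ v ∈ A ∧ w ∉ A then (1:ℝ) else 0)
        = ∑ v, ∑ w, (if G.Adj v w then chi v - chi v * chi w else 0) := by
          refine Finset.sum_congr rfl fun v _ => Finset.sum_congr rfl fun w _ => ?_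
          by_cases h1 : G.Adj v w <;> by_cases h2 : v ∈ A <;> by_cases h3 : w ∈ A <;>
            simp [hchi, h1, h2, h3]
      _ = ∑ v, ∑ w ∈ G.neighborFinset v, (chi v - chi v * chi w) := by
          refine Finset.sum_congr rfl fun v _ => ?_
          rw [SimpleGraph.neighborFinset_eq_filter, Finset.sum_filter]
      _ = ∑ v, ((d:ℝ) * chi v - chi v * Nchi v) := by
          refine Finset.sum_congr rfl fun v _ => ?_
          rw [Finset.sum_sub_distrib, Finset.sum_const,
            SimpleGraph.card_neighborFinset_eq_degree, hreg v, nsmul_eq_mul,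
            ← Finset.mul_sum]
      _ = d * a - S1 := by
          rw [Finset.sum_sub_distrib, ← Finset.mul_sum, hS0, hS1def]
  set f : EuclideanSpace ℝ V := WithLp.toLp 2 (fun v => chi v - alp) with hf
  have hfsum : ∑ v, f v = 0 := by
    simp only [hf]
    rw [Finset.sum_sub_distrib, hS0, Finset.sum_const, Finset.card_univ, nsmul_eq_mul, halp]
    field_simp; simp [hn]
  have hfsq : ∑ v, f v ^ 2 = a - a^2/n := by
    simp only [hf]
    calc ∑ v, (chi v - alp)^2 = ∑ v, (chi v - 2*alp*chi v + alp^2) := by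
          refine Finset.sum_congr rfl fun v _ => ?_
          linear_combination hchi2 v
      _ = a - 2*alp*a + n*alp^2 := by
          rw [Finset.sum_add_distrib, Finset.sum_sub_distrib, hS0, ← Finset.mul_sum, hS0,
            Finset.sum_const, Finset.card_univ, nsmul_eq_mul]
      _ = a - a^2/n := by rw [halp]; field_simp; ring
  have hmv : ∀ v, M.mulVec f v = chi v - (d:ℝ)⁻¹ * Nchi v := by
    intro v
    have h1 : M.mulVec f v = f v - (d:ℝ)⁻¹ * ∑ w ∈ G.neighborFinset v, f w := by
      rw [hM]
      simp [Matrix.sub_mulVec, Matrix.smul_mulVec, Matrix.one_mulVec,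
        SimpleGraph.adjMatrix_mulVec_apply]
    rw [h1]
    have h2 : ∑ w ∈ G.neighborFinset v, f w = Nchi v - d * alp := by
      simp only [hf]
      rw [Finset.sum_sub_distrib, Finset.sum_const,
        SimpleGraph.card_neighborFinset_eq_degree, hreg v, nsmul_eq_mul, hNchi]
    rw [h2]
    show chi v - alp - (d:ℝ)⁻¹ * (Nchi v - d * alp) = chi v - (d:ℝ)⁻¹ * Nchi v
    field_simp
    ring
  have hRHS : ∑ v, f v * M.mulVec f v = (X.card : ℝ) / d := by
    calc ∑ v, f v * M.mulVec f v
        = ∑ v, (chi v - alp) * (chi v - (d:ℝ)⁻¹ * Nchi v) := by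
          refine Finset.sum_congr rfl fun v _ => ?_
          rw [hmv v]
      _ = ∑ v, (chi v - (d:ℝ)⁻¹ * (chi v * Nchi v) - alp * chi v
            + alp * ((d:ℝ)⁻¹ * Nchi v)) := by
          refine Finset.sum_congr rfl fun v _ => ?_
          linear_combination hchi2 v
      _ = (∑ v, chi v) - (d:ℝ)⁻¹ * S1 - alp * (∑ v, chi v)
            + alp * ((d:ℝ)⁻¹ * (∑ v, Nchi v)) := by
          rw [Finset.sum_add_distrib, Finset.sum_sub_distrib, Finset.sum_sub_distrib,
            ← Finset.mul_sum, ← Finset.mul_sum, ← Finset.mul_sum, ← Finset.mul_sum, hS1def]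
      _ = (X.card : ℝ) / d := by
          rw [hS0, hS2, hXcard]
          field_simp
          ring
  have hker := kerConst10 G hconn d hreg
  have hspec := specLB10 M hMH lam hmin hker f hfsum
  rw [hfsq, hRHS] at hspec
  -- the crossing pairs inject into the removed edges
  have hXle : X.card ≤ (G.edgeFinset \ G'.edgeFinset).card := by
    refine Finset.card_le_card_of_injOn (fun p : V × V => s(p.1, p.2)) ?_ ?_
    · intro p hp
      rw [Finset.mem_coe] at hp ⊢
      rw [hX, Finset.mem_filter] at hp
      have hadj := hp.2.1
      have h1 := hp.2.2.1
      have h2 := hp.2.2.2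
      rw [Finset.mem_sdiff]
      refine ⟨?_, ?_⟩
      · rw [SimpleGraph.mem_edgeFinset]
        exact hadj
      · intro hmem
        rw [SimpleGraph.mem_edgeFinset, SimpleGraph.mem_edgeSet] at hmem
        exact h2 (hAcl p.1 h1 p.2 hmem.reachable)
    · intro p hp q hq hpq
      simp only [Finset.coe_filter, Set.mem_setOf_eq, hX, Finset.mem_filter] at hp hq
      rw [Sym2.eq_iff] at hpq
      rcases hpq with ⟨h1, h2⟩ | ⟨h1, h2⟩
      · exact Prod.ext h1 h2
      · exact absurd (h1 ▸ hp.2.2.1) hq.2.2.2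
  have hXleR : (X.card : ℝ) ≤ ((G.edgeFinset \ G'.edgeFinset).card : ℝ) := by
    exact_mod_cast hXle
  -- final numeric contradiction
  set s : ℝ := Real.sqrt ((d:ℝ) - 1) with hs
  have hs0 : 0 ≤ s := Real.sqrt_nonneg _
  have hd3 : (3:ℝ) ≤ d := by exact_mod_cast hd
  have hs2 : s^2 = (d:ℝ) - 1 := Real.sq_sqrt (by linarith)
  have hshalf : s ≤ (d:ℝ)/2 := by
    rw [hs]
    calc Real.sqrt ((d:ℝ) - 1) ≤ Real.sqrt (((d:ℝ)/2)^2) :=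
          Real.sqrt_le_sqrt (by nlinarith)
      _ = (d:ℝ)/2 := Real.sqrt_sq (by positivity)
  have hlam0 : 0 ≤ lam := by
    have h1 : 2*s ≤ (d:ℝ) := by linarith
    have h2 : 2*s/d ≤ 1 := by rw [div_le_one hdR]; linarith
    linarith
  have hQ : 2*(n:ℝ)/9 ≤ a - a^2/n := by
    have hprod : 0 ≤ (a - (n:ℝ)/3) * (2*(n:ℝ)/3 - a) :=
      mul_nonneg (by linarith) (by linarith)
    have hmul : (a - a^2/n) = a * ((n:ℝ) - a) / n := by field_simp
    rw [hmul, le_div_iff₀ hnR]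
    nlinarith [hprod]
  have hc1 : (1 - 2*s/d) * (2*(n:ℝ)/9) ≤ lam * (a - a^2/n) := by
    have h2 : 2*s/d ≤ 1 := by rw [div_le_one hdR]; linarith
    apply mul_le_mul hram hQ (by positivity) hlam0
  have hc2 : lam * (a - a^2/n) < ((d:ℝ)/6 - s/3) * n / d := by
    calc lam * (a - a^2/n) ≤ (X.card : ℝ)/d := hspec
      _ ≤ ((G.edgeFinset \ G'.edgeFinset).card : ℝ)/d :=
          div_le_div_of_nonneg_right hXleR hdR.le
      _ < ((d:ℝ)/6 - s/3) * n / d := (div_lt_div_iff_of_pos_right hdR).mpr hrem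
  have hfinal : ((d:ℝ)/6 - s/3) * n / d ≤ (1 - 2*s/d) * (2*(n:ℝ)/9) := by
    rw [div_le_iff₀ hdR]
    have he : (1 - 2*s/d) * (2*(n:ℝ)/9) * d = ((d:ℝ) - 2*s) * (2*(n:ℝ)/9) := by
      field_simp
    rw [he]
    nlinarith [hnR.le, hshalf]
  linarith
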